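/- Let n ≥ 1 and let A, B, C be n×n complex positive semidefinite matrices. Define J[M] := (tr M)·I − M. Then J[A·B]·C + J[C·B]·A is positive semidefinite. -/

import Mathlib

open Matrix ComplexOrder
open scoped InnerProductSpace

namespace Stmt1Aux

variable {n : ℕ}

variable {n : ℕ}

noncomputable def toE (v : Fin n → ℂ) : EuclideanSpace ℂ (Fin n) :=
  (WithLp.equiv 2 _).symm v

lemma inner_toE (u v : Fin n → ℂ) : ⟪toE u, toE v⟫_ℂ = star u ⬝ᵥ v := by
  rw [dotProduct_comm]; rfl

lemma normsq_toE (v : Fin n → ℂ) : ‖toE v‖ ^ 2 = ∑ i, ‖v i‖ ^ 2 := by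
  rw [EuclideanSpace.norm_eq, Real.sq_sqrt (by positivity)]
  rfl

lemma trace_eq (M : Matrix (Fin n) (Fin n) ℂ) :
    (Mᴴ * M).trace = ((∑ i, ∑ j, ‖M i j‖ ^ 2 : ℝ) : ℂ) := by
  simp only [Matrix.trace, Matrix.diag, Matrix.mul_apply, Matrix.conjTranspose_apply]
  push_cast
  rw [Finset.sum_comm]
  congr 1; ext i; congr 1; ext j
  rw [← Complex.ofReal_pow, ← Complex.normSq_eq_norm_sq, Complex.normSq_eq_conj_mul_self]
  rfl

lemma frob (M : Matrix (Fin n) (Fin n) ℂ) (v : Fin n → ℂ) :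
    ‖toE (M *ᵥ v)‖ ^ 2 ≤ (Mᴴ * M).trace.re * ‖toE v‖ ^ 2 := by
  have htr : (Mᴴ * M).trace.re = ∑ i, ∑ j, ‖M i j‖ ^ 2 := by
    rw [trace_eq]; exact Complex.ofReal_re _
  rw [htr, normsq_toE, Finset.sum_mul]
  apply Finset.sum_le_sum
  intro i _
  have h1 : (M *ᵥ v) i = ⟪toE (star (M i)), toE v⟫_ℂ := by
    rw [inner_toE, star_star]; rfl
  have h2 : ‖(M *ᵥ v) i‖ ≤ ‖toE (star (M i))‖ * ‖toE v‖ := by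
    rw [h1]; exact norm_inner_le_norm _ _
  have h3 : ‖toE (star (M i))‖ ^ 2 = ∑ j, ‖M i j‖ ^ 2 := by
    rw [normsq_toE]; simp [Pi.star_apply]
  calc ‖(M *ᵥ v) i‖ ^ 2 ≤ (‖toE (star (M i))‖ * ‖toE v‖) ^ 2 := by
        apply pow_le_pow_left₀ (norm_nonneg _) h2
    _ = (∑ j, ‖M i j‖ ^ 2) * ‖toE v‖ ^ 2 := by rw [mul_pow, h3]


lemma normsq_toE' (v : Fin n → ℂ) : ‖toE v‖ ^ 2 = (star v ⬝ᵥ v).re := by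
  rw [normsq_toE]
  simp only [dotProduct, Pi.star_apply, Complex.re_sum]
  congr 1; ext i
  rw [Complex.star_def, mul_comm, Complex.mul_conj, Complex.ofReal_re, Complex.normSq_eq_norm_sq]

end Stmt1Aux

/-- `J[M] := (tr M) • I − M`. -/
noncomputable def Jmat {n : ℕ} (M : Matrix (Fin n) (Fin n) ℂ) : Matrix (Fin n) (Fin n) ℂ :=
  M.trace • (1 : Matrix (Fin n) (Fin n) ℂ) - M

theorem stmt1 {n : ℕ} (hn : 1 ≤ n) (A B C : Matrix (Fin n) (Fin n) ℂ)
    (hA : A.PosSemidef) (hB : B.PosSemidef) (hC : C.PosSemidef) :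
    (Jmat (A * B) * C + Jmat (C * B) * A).PosSemidef := by
  classical
  have hsq : ∀ M : Matrix (Fin n) (Fin n) ℂ, M.PosSemidef → ∃ s : Matrix (Fin n) (Fin n) ℂ,
      sᴴ = s ∧ s * s = M := by
    intro M hM
    open scoped MatrixOrder in
    have h0 : (0 : Matrix (Fin n) (Fin n) ℂ) ≤ M := Matrix.nonneg_iff_posSemidef.2 hM
    open scoped MatrixOrder in
    exact ⟨CFC.sqrt M, IsSelfAdjoint.of_nonneg (CFC.sqrt_nonneg M), CFC.sqrt_mul_sqrt_self M h0⟩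
  obtain ⟨a, ha, haa⟩ := hsq A hA
  obtain ⟨b, hb, hbb⟩ := hsq B hB
  obtain ⟨c, hc, hcc⟩ := hsq C hC
  have ht1 : star (A * B).trace = (A * B).trace := by
    rw [← trace_conjTranspose, conjTranspose_mul, hA.1, hB.1, trace_mul_comm]
  have ht2 : star (C * B).trace = (C * B).trace := by
    rw [← trace_conjTranspose, conjTranspose_mul, hC.1, hB.1, trace_mul_comm]
  have hS : Jmat (A * B) * C + Jmat (C * B) * A =
      (A * B).trace • C + (C * B).trace • A - (A * B * C + C * B * A) := by
    simp only [Jmat, Matrix.sub_mul, Matrix.smul_mul, Matrix.one_mul]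
    abel
  rw [hS]
  refine Matrix.PosSemidef.of_dotProduct_mulVec_nonneg ?_ ?_
  · show _ᴴ = _
    simp only [conjTranspose_sub, conjTranspose_add, conjTranspose_smul, conjTranspose_mul,
      hA.1.eq, hB.1.eq, hC.1.eq, ht1, ht2, Matrix.mul_assoc]
    rw [add_comm (C * (B * A))]
  · intro x
    set u := (b * a) *ᵥ (a *ᵥ x) with hu_def
    set w := (b * c) *ᵥ (c *ᵥ x) with hw_def
    have expand : ∀ p q : Matrix (Fin n) (Fin n) ℂ, pᴴ = p → qᴴ = q →
        star ((b * p) *ᵥ (p *ᵥ x)) ⬝ᵥ ((b * q) *ᵥ (q *ᵥ x)) =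
          star x ⬝ᵥ (p * p * (b * b) * (q * q)) *ᵥ x := by
      intro p q hp hq
      simp [star_mulVec, conjTranspose_mul, hp, hq, hb, mulVec_mulVec, vecMul_vecMul,
        dotProduct_mulVec, Matrix.mul_assoc]
    have habc : star x ⬝ᵥ (A * B * C) *ᵥ x = star u ⬝ᵥ w := by
      rw [hu_def, hw_def, expand a c ha hc, haa, hbb, hcc]
    have hcba : star x ⬝ᵥ (C * B * A) *ᵥ x = star w ⬝ᵥ u := by
      rw [hu_def, hw_def, expand c a hc ha, haa, hbb, hcc]
    have hval : star x ⬝ᵥ ((A * B).trace • C + (C * B).trace • A - (A * B * C + C * B * A)) *ᵥ x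
        = (A * B).trace * (star x ⬝ᵥ C *ᵥ x) + (C * B).trace * (star x ⬝ᵥ A *ᵥ x)
          - (star u ⬝ᵥ w + star w ⬝ᵥ u) := by
      rw [← habc, ← hcba]
      simp [Matrix.sub_mulVec, Matrix.add_mulVec, Matrix.smul_mulVec, dotProduct_sub,
        dotProduct_add, dotProduct_smul, smul_eq_mul]
    -- real quantities
    set rA := (star x ⬝ᵥ A *ᵥ x).re with hrA_def
    set rC := (star x ⬝ᵥ C *ᵥ x).re with hrC_def
    obtain ⟨hrA0, hiA⟩ := Complex.le_def.1 (hA.dotProduct_mulVec_nonneg x)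
    obtain ⟨hrC0, hiC⟩ := Complex.le_def.1 (hC.dotProduct_mulVec_nonneg x)
    simp only [Complex.zero_re, Complex.zero_im] at hrA0 hiA hrC0 hiC
    have hqA : star x ⬝ᵥ A *ᵥ x = (rA : ℂ) := Complex.ext rfl (by simp [← hiA])
    have hqC : star x ⬝ᵥ C *ᵥ x = (rC : ℂ) := Complex.ext rfl (by simp [← hiC])
    set t1 := ∑ i, ∑ j, ‖(b * a) i j‖ ^ 2 with ht1_def
    set t2 := ∑ i, ∑ j, ‖(b * c) i j‖ ^ 2 with ht2_def
    have htA : (A * B).trace = (t1 : ℂ) := by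
      rw [← Stmt1Aux.trace_eq, conjTranspose_mul, hb, ha, ← haa, ← hbb,
        Matrix.mul_assoc a a (b * b), trace_mul_comm]
      simp [Matrix.mul_assoc]
    have htC : (C * B).trace = (t2 : ℂ) := by
      rw [← Stmt1Aux.trace_eq, conjTranspose_mul, hb, hc, ← hcc, ← hbb,
        Matrix.mul_assoc c c (b * b), trace_mul_comm]
      simp [Matrix.mul_assoc]
    have ht10 : 0 ≤ t1 := by
      rw [ht1_def]
      exact Finset.sum_nonneg fun i _ => Finset.sum_nonneg fun j _ => sq_nonneg _
    have ht20 : 0 ≤ t2 := by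
      rw [ht2_def]
      exact Finset.sum_nonneg fun i _ => Finset.sum_nonneg fun j _ => sq_nonneg _
    set ρ := (star u ⬝ᵥ w).re with hρ_def
    have hwu : star u ⬝ᵥ w + star w ⬝ᵥ u = ((2 * ρ : ℝ) : ℂ) := by
      have : star w ⬝ᵥ u = star (star u ⬝ᵥ w) := star_dotProduct _ _
      rw [this, Complex.star_def, Complex.add_conj]
    -- norm facts
    have hax : ‖Stmt1Aux.toE (a *ᵥ x)‖ ^ 2 = rA := by
      rw [Stmt1Aux.normsq_toE', hrA_def]
      congr 1
      rw [star_mulVec, ha, ← dotProduct_mulVec, mulVec_mulVec, haa]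
    have hcx : ‖Stmt1Aux.toE (c *ᵥ x)‖ ^ 2 = rC := by
      rw [Stmt1Aux.normsq_toE', hrC_def]
      congr 1
      rw [star_mulVec, hc, ← dotProduct_mulVec, mulVec_mulVec, hcc]
    have hP2 : ‖Stmt1Aux.toE u‖ ^ 2 ≤ t1 * rA := by
      have h := Stmt1Aux.frob (b * a) (a *ᵥ x)
      rwa [Stmt1Aux.trace_eq, Complex.ofReal_re, hax, ← ht1_def, ← hu_def] at h
    have hQ2 : ‖Stmt1Aux.toE w‖ ^ 2 ≤ t2 * rC := by
      have h := Stmt1Aux.frob (b * c) (c *ᵥ x)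
      rwa [Stmt1Aux.trace_eq, Complex.ofReal_re, hcx, ← ht2_def, ← hw_def] at h
    have hρle : ρ ≤ ‖Stmt1Aux.toE u‖ * ‖Stmt1Aux.toE w‖ := by
      calc ρ = (⟪Stmt1Aux.toE u, Stmt1Aux.toE w⟫_ℂ).re := by rw [Stmt1Aux.inner_toE]
        _ ≤ ‖⟪Stmt1Aux.toE u, Stmt1Aux.toE w⟫_ℂ‖ := Complex.re_le_norm _
        _ ≤ _ := norm_inner_le_norm _ _
    have hPle : ‖Stmt1Aux.toE u‖ ≤ Real.sqrt t1 * Real.sqrt rA := by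
      have h := Real.sqrt_le_sqrt hP2
      rwa [Real.sqrt_sq (norm_nonneg _), Real.sqrt_mul ht10] at h
    have hQle : ‖Stmt1Aux.toE w‖ ≤ Real.sqrt t2 * Real.sqrt rC := by
      have h := Real.sqrt_le_sqrt hQ2
      rwa [Real.sqrt_sq (norm_nonneg _), Real.sqrt_mul ht20] at h
    have hkey : ρ ≤ Real.sqrt t1 * Real.sqrt rA * (Real.sqrt t2 * Real.sqrt rC) :=
      hρle.trans (mul_le_mul hPle hQle (norm_nonneg _)
        (mul_nonneg (Real.sqrt_nonneg _) (Real.sqrt_nonneg _)))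
    have es1 : t1 = Real.sqrt t1 ^ 2 := (Real.sq_sqrt ht10).symm
    have es2 : t2 = Real.sqrt t2 ^ 2 := (Real.sq_sqrt ht20).symm
    have ev1 : rA = Real.sqrt rA ^ 2 := (Real.sq_sqrt hrA0).symm
    have ev2 : rC = Real.sqrt rC ^ 2 := (Real.sq_sqrt hrC0).symm
    -- conclude
    rw [hval, htA, htC, hqA, hqC, hwu]
    have hcast : (t1 : ℂ) * (rC : ℂ) + (t2 : ℂ) * (rA : ℂ) - ((2 * ρ : ℝ) : ℂ)
        = ((t1 * rC + t2 * rA - 2 * ρ : ℝ) : ℂ) := by push_cast; ring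
    rw [hcast, Complex.zero_le_real]
    nlinarith [sq_nonneg (Real.sqrt t1 * Real.sqrt rC - Real.sqrt t2 * Real.sqrt rA), hkey,
      es1, es2, ev1, ev2]
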